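/- Let s₁,s₂ ≥ 1, 1 ≤ m ≤ min(s₁,s₂), r = s₁+s₂-2m, δ = r+1, d_i = s_i+1, and let τ₀ ∈ M_{d₂}⊗M_{d₁} be the Clebsch–Gordan highest weight vector of the δ-dimensional summand. Embedding M_{d₂}⊗M_{d₁} into M₂^{⊗s₂}⊗M₂^{⊗s₁} via e_l ↦ θ_l and applying the m middle trivial projections followed by the identification of the highest summand of M₂^{⊗r} with M_δ, one obtains C(m; s₁,s₂) · e₀^{(δ)}, where C(m;s₁,s₂) = [s₁-m]_q![s₂-m]_q![s₁+s₂-m+1]_q! / ([2]_q^m [s₁]_q![s₂]_q![s₁+s₂-2m+1]_q!) ≠ 0. -/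

import Mathlib

noncomputable section
open Finset

/-- `q` is a nonzero complex number that is not a root of unity. -/
def NotRootOfUnity (q : ℂ) : Prop := q ≠ 0 ∧ ∀ m : ℤ, m ≠ 0 → q ^ m ≠ 1

/-- The q-integer `[m]_q = (q^m - q^(-m))/(q - q⁻¹)`. -/
def qint (q : ℂ) (m : ℤ) : ℂ := (q ^ m - q ^ (-m)) / (q - q⁻¹)

/-- The q-factorial `[n]_q! = ∏_{m=1}^n [m]_q`. -/
def qfact (q : ℂ) (n : ℕ) : ℂ := ∏ m ∈ Finset.range n, qint q ((m : ℤ) + 1)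

/-- Coefficient model of the tensor power `M₂^{⊗s}` of the two-dimensional irreducible
`U_q(sl₂)`-module: a vector is the coefficient function of the basis
`e_{l₁} ⊗ ⋯ ⊗ e_{l_s}` (index `0` is the leftmost tensorand). -/
abbrev V (s : ℕ) := (Fin s → Fin 2) → ℂ

/-- The highest weight vector `e₀ ⊗ ⋯ ⊗ e₀` of `M₂^{⊗s}`. -/
def e0 (s : ℕ) : V s := fun m => if ∀ i, m i = 0 then 1 else 0

/-- Action of `F` on `M₂^{⊗s}` via `Δ^(s)(F) = ∑ᵢ (K⁻¹)^{⊗(i-1)} ⊗ F ⊗ 1^{⊗(s-i)}`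
(the first coproduct leg acts on the leftmost tensorand;
`F.e₀ = e₁`, `F.e₁ = 0`, `K⁻¹.e_l = q^{2l-1} e_l` in `M₂`). -/
def Fop (q : ℂ) (s : ℕ) (v : V s) : V s :=
  fun m => ∑ i : Fin s,
    (∏ j : Fin s, if j < i then q ^ (2 * ((m j : ℕ) : ℤ) - 1) else 1) *
      (if m i = 1 then v (Function.update m i 0) else 0)

/-- Action of `E` on `M₂^{⊗s}` via `Δ^(s)(E) = ∑ᵢ 1^{⊗(i-1)} ⊗ E ⊗ K^{⊗(s-i)}`
(`E.e₁ = e₀`, `E.e₀ = 0`, `K.e_l = q^{1-2l} e_l` in `M₂`). -/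
def Eop (q : ℂ) (s : ℕ) (v : V s) : V s :=
  fun m => ∑ i : Fin s,
    (∏ j : Fin s, if i < j then q ^ (1 - 2 * ((m j : ℕ) : ℤ)) else 1) *
      (if m i = 0 then v (Function.update m i 1) else 0)

/-- Action of `K` on `M₂^{⊗s}` (diagonal: `K.e_l = q^{1-2l} e_l` in each tensorand). -/
def Kop (q : ℂ) (s : ℕ) (v : V s) : V s :=
  fun m => (∏ j : Fin s, q ^ (1 - 2 * ((m j : ℕ) : ℤ))) * v m

/-- The vector `θ_k^(s) = F^k.(e₀ ⊗ ⋯ ⊗ e₀)` in `M₂^{⊗s}`. -/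
def theta (q : ℂ) (s k : ℕ) : V s := (Fop q s)^[k] (e0 s)

/-- Insert the values `a`, `b` at (0-indexed) positions `j`, `j+1` into the multi-index `m`. -/
def insert2 (s j : ℕ) (m : Fin (s - 2) → Fin 2) (a b : Fin 2) : Fin s → Fin 2 :=
  fun i =>
    if (i : ℕ) < j then (if h : (i : ℕ) < s - 2 then m ⟨i, h⟩ else 0)
    else if (i : ℕ) = j then a
    else if (i : ℕ) = j + 1 then b
    else (if h : (i : ℕ) - 2 < s - 2 then m ⟨(i : ℕ) - 2, h⟩ else 0)

/-- Matrix coefficients of the `U_q(sl₂)`-equivariant projection `π̂^(1) : M₂ ⊗ M₂ → ℂ`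
onto the trivial summand (normalized so that the Clebsch–Gordan singlet maps to `1`):
`π̂(e₀⊗e₀) = π̂(e₁⊗e₁) = 0`, `π̂(e₀⊗e₁) = (q⁻¹-q)/[2]_q`, `π̂(e₁⊗e₀) = (1-q⁻²)/[2]_q`
(the first argument is the left tensorand). -/
def pival (q : ℂ) (a b : Fin 2) : ℂ :=
  if a = 0 ∧ b = 1 then (q⁻¹ - q) / qint q 2
  else if a = 1 ∧ b = 0 then (1 - q ^ (-2 : ℤ)) / qint q 2
  else 0

/-- The projection `π̂_j^(1) : M₂^{⊗s} → M₂^{⊗(s-2)}` contracting the tensorands at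
(0-indexed) positions `j`, `j+1` with `π̂^(1)`. -/
def pihat (q : ℂ) (s j : ℕ) (v : V s) : V (s - 2) :=
  fun m => ∑ a : Fin 2, ∑ b : Fin 2, pival q a b * v (insert2 s j m a b)

/-- The tensor product map `M₂^{⊗s₂} ⊗ M₂^{⊗s₁} → M₂^{⊗(s₂+s₁)}` (left block first). -/
def tens {s₂ s₁ : ℕ} (v : V s₂) (w : V s₁) : V (s₂ + s₁) :=
  fun m => v (fun i => m (Fin.castAdd s₁ i)) * w (fun i => m (Fin.natAdd s₂ i))

/-- Transport of vectors along an equality of the number of tensor factors. -/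
def reindex {n n' : ℕ} (h : n = n') (v : V n) : V n' :=
  fun m => v (fun i => m (Fin.cast h i))

/-- `t` successive middle projections: at each step the projection `π̂^(1)` contracts the
two tensorands adjacent to the interface of the two blocks (the interface moves one
step to the left in the left block after each contraction). -/
def pihatIter (q : ℂ) : (t : ℕ) → (s j : ℕ) → V s → V (s - 2 * t)
  | 0, _, _, v => v
  | (t + 1), s, j, v => reindex (by omega) (pihatIter q t (s - 2) (j - 1) (pihat q s j v))

/-- The image under the embedding `I^{(s₂)} ⊗ I^{(s₁)} : M_{d₂} ⊗ M_{d₁} ↪ M₂^{⊗s₂} ⊗ M₂^{⊗s₁}`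
(`e_l ↦ θ_l`) of the Clebsch–Gordan highest weight vector
`τ₀ = ∑_{l₁+l₂=m} (-1)^{l₁} ([s₁-l₁]![s₂-l₂]!)/([l₁]![s₁]![l₂]![s₂]!)
  q^{l₁(s₁-l₁+1)} (q-q⁻¹)^{-m} (e_{l₂} ⊗ e_{l₁})`. -/
def tau0emb (q : ℂ) (s₁ s₂ m : ℕ) : V (s₂ + s₁) :=
  fun mm => ∑ l₁ ∈ Finset.range (m + 1),
    ((-1) ^ l₁ * (qfact q (s₁ - l₁) * qfact q (s₂ - (m - l₁))) /
        (qfact q l₁ * qfact q s₁ * qfact q (m - l₁) * qfact q s₂) *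
        (q ^ (l₁ * (s₁ - l₁ + 1)) / (q - q⁻¹) ^ m)) *
      tens (theta q s₂ (m - l₁)) (theta q s₁ l₁) mm

/-- The constant `C(m; s₁, s₂)`. -/
def Cconst (q : ℂ) (m s₁ s₂ : ℕ) : ℂ :=
  qfact q (s₁ - m) * qfact q (s₂ - m) * qfact q (s₁ + s₂ - m + 1) /
    (qint q 2 ^ m * qfact q s₁ * qfact q s₂ * qfact q (s₁ + s₂ - 2 * m + 1))

namespace CG
variable {q : ℂ}

lemma qsub_ne (hq : NotRootOfUnity q) : q - q⁻¹ ≠ 0 := by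
  have h0 := hq.1
  intro h
  apply hq.2 2 (by norm_num)
  have hq1 : q = q⁻¹ := sub_eq_zero.mp h
  have hqq : q * q = 1 := by
    nth_rewrite 2 [hq1]
    field_simp
  rw [show (2:ℤ) = 1 + 1 by norm_num, zpow_add₀ h0, zpow_one, hqq]

lemma qint_ne (hq : NotRootOfUnity q) {n : ℤ} (hn : n ≠ 0) : qint q n ≠ 0 := by
  have h0 := hq.1
  unfold qint
  apply div_ne_zero _ (qsub_ne hq)
  intro h
  apply hq.2 (2*n) (by omega)
  have h1 : q ^ n = q ^ (-n) := sub_eq_zero.mp h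
  calc q ^ (2*n) = q ^ n * q ^ n := by rw [← zpow_add₀ h0, two_mul]
    _ = q ^ n * q ^ (-n) := by rw [h1]
    _ = 1 := by rw [← zpow_add₀ h0, add_neg_cancel, zpow_zero]

lemma qfact_ne (hq : NotRootOfUnity q) (n : ℕ) : qfact q n ≠ 0 := by
  unfold qfact
  rw [Finset.prod_ne_zero_iff]
  intro m _
  exact qint_ne hq (by omega)

lemma qfact_succ (n : ℕ) : qfact q (n+1) = qfact q n * qint q ((n : ℤ) + 1) :=
  Finset.prod_range_succ _ n

lemma qint_zero : qint q 0 = 0 := by simp [qint]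

lemma qint_one (hq : NotRootOfUnity q) : qint q 1 = 1 := by
  rw [qint]
  simp only [zpow_one, zpow_neg_one]
  exact div_self (qsub_ne hq)

/-- `q^A [B] + q^{-B} [A] = [A+B]`. -/
lemma qAdd (hq : NotRootOfUnity q) (A B : ℤ) :
    q ^ A * qint q B + q ^ (-B) * qint q A = qint q (A + B) := by
  have h0 := hq.1
  have hs := qsub_ne hq
  have hx : q ^ A ≠ 0 := zpow_ne_zero _ h0
  have hy : q ^ B ≠ 0 := zpow_ne_zero _ h0
  rw [qint, qint, qint, zpow_neg q A, zpow_neg q B, zpow_add₀ h0, neg_add, zpow_add₀ h0,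
    zpow_neg q A, zpow_neg q B, ← mul_div_assoc, ← mul_div_assoc, ← add_div]
  congr 1
  field_simp
  ring

/-- `q^{-n} + q·[n] = [n+1]`. -/
lemma qB (hq : NotRootOfUnity q) (n : ℤ) :
    q ^ (-n) + q * qint q n = qint q (n + 1) := by
  have h := qAdd hq 1 n
  rw [zpow_one, qint_one hq, mul_one, add_comm (1:ℤ) n] at h
  rw [← h, add_comm]

/-- `q^n + q⁻¹·[n] = [n+1]`. -/
lemma qA' (hq : NotRootOfUnity q) (n : ℤ) :
    q ^ n + q⁻¹ * qint q n = qint q (n + 1) := by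
  have h := qAdd hq n 1
  rw [qint_one hq, mul_one, zpow_neg_one] at h
  rw [← h, add_comm]

lemma prod_zpow' (h0 : q ≠ 0) {n : ℕ} (f : Fin n → ℤ) :
    ∏ j, q ^ f j = q ^ (∑ j, f j) := by
  induction n with
  | zero => simp
  | succ n ih => rw [Fin.prod_univ_succ, Fin.sum_univ_succ, ih (fun j => f j.succ),
      ← zpow_add₀ h0]

end CG


namespace CG2
open CG
variable {q : ℂ}

lemma theta_succ (s k : ℕ) : theta q s (k+1) = Fop q s (theta q s k) :=
  Function.iterate_succ_apply' _ _ _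

def cnt {s : ℕ} (m : Fin s → Fin 2) : ℕ := ∑ i, ((m i : ℕ))

lemma fin2_cases (a : Fin 2) : a = 0 ∨ a = 1 := by
  rcases a with ⟨a, ha⟩
  interval_cases a
  · left; rfl
  · right; rfl

lemma cnt_update {s : ℕ} (m : Fin s → Fin 2) (i : Fin s) (h : m i = 1) :
    cnt (Function.update m i 0) = cnt m - 1 := by
  have h1 : (fun j => ((Function.update m i 0 j : Fin 2) : ℕ))
      = Function.update (fun j => ((m j : ℕ))) i 0 := by
    funext j
    rcases eq_or_ne j i with rfl | hj
    · simp
    · rw [Function.update_of_ne hj, Function.update_of_ne hj]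
  have h2 : cnt (Function.update m i 0) = ∑ j, Function.update (fun j => ((m j : ℕ))) i 0 j := by
    rw [cnt]; rw [h1]
  rw [h2, Finset.sum_update_of_mem (Finset.mem_univ i), ← Finset.erase_eq]
  have h3 : cnt m = (m i : ℕ) + ∑ j ∈ Finset.univ.erase i, ((m j : ℕ)) :=
    (Finset.add_sum_erase _ _ (Finset.mem_univ i)).symm
  rw [h3, h]
  norm_num

lemma cnt_pos {s : ℕ} (m : Fin s → Fin 2) (i : Fin s) (h : m i = 1) : 1 ≤ cnt m := by
  have h1 : ((m i : ℕ)) ≤ ∑ j, ((m j : ℕ)) :=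
    Finset.single_le_sum (f := fun j => ((m j : ℕ))) (fun j _ => Nat.zero_le _)
      (Finset.mem_univ i)
  rw [h] at h1
  simpa [cnt] using h1

lemma theta_support (s : ℕ) : ∀ (k : ℕ) (m : Fin s → Fin 2), cnt m ≠ k → theta q s k m = 0 := by
  intro k
  induction k with
  | zero =>
    intro m h
    show e0 s m = 0
    rw [e0, if_neg]
    intro hall
    exact h (by simp [cnt, hall])
  | succ k ih =>
    intro m h
    rw [theta_succ]
    apply Finset.sum_eq_zero
    intro i _
    by_cases hi : m i = 1
    · rw [if_pos hi, ih _ (by rw [cnt_update m i hi]; have := cnt_pos m i hi; omega), mul_zero]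
    · rw [if_neg hi, mul_zero]

/-- Peeling the first (leftmost) tensorand. -/
lemma thetaB (hq : NotRootOfUnity q) (s : ℕ) :
    ∀ (k : ℕ) (m : Fin (s+1) → Fin 2),
    theta q (s+1) k m =
      if m 0 = 0 then q ^ (-(k:ℤ)) * theta q s k (fun i => m i.succ)
      else qint q (k:ℤ) * theta q s (k-1) (fun i => m i.succ) := by
  have h0 := hq.1
  intro k
  induction k with
  | zero =>
    intro m
    by_cases hm : m 0 = 0
    · rw [if_pos hm]
      norm_num
      show e0 (s+1) m = e0 s (fun i => m i.succ)
      rw [e0, e0]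
      congr 1
      apply propext
      constructor
      · intro h i; exact h i.succ
      · intro h i; refine Fin.cases hm (fun j => h j) i
    · rw [if_neg hm, Nat.cast_zero, qint_zero, zero_mul]
      show e0 (s+1) m = 0
      rw [e0, if_neg]
      intro hall; exact hm (hall 0)
  | succ k ih =>
    intro m
    rw [theta_succ]
    show (∑ i : Fin (s+1),
      (∏ j : Fin (s+1), if j < i then q ^ (2 * ((m j : ℕ) : ℤ) - 1) else 1) *
        (if m i = 1 then theta q (s+1) k (Function.update m i 0) else 0)) = _
    rw [Fin.sum_univ_succ]
    have hP0 : (∏ j : Fin (s+1), if j < (0 : Fin (s+1)) then q ^ (2*((m j : ℕ):ℤ)-1) else 1) = 1 := by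
      apply Finset.prod_eq_one; intro j _; rw [if_neg (Fin.not_lt_zero j)]
    rw [hP0, one_mul]
    have hsucc : ∀ i : Fin s,
        (∏ j : Fin (s+1), if j < i.succ then q ^ (2*((m j : ℕ):ℤ)-1) else 1)
          = q ^ (2*((m 0 : ℕ):ℤ)-1) *
            ∏ j : Fin s, (if j < i then q ^ (2*((m j.succ : ℕ):ℤ)-1) else 1) := by
      intro i
      rw [Fin.prod_univ_succ, if_pos (Fin.succ_pos i)]
      congr 1
      apply Finset.prod_congr rfl
      intro j _
      simp only [Fin.succ_lt_succ_iff]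
    have hupd : ∀ i : Fin s,
        (fun j : Fin s => Function.update m i.succ 0 j.succ)
          = Function.update (fun j : Fin s => m j.succ) i 0 := by
      intro i; funext j
      rcases eq_or_ne j i with rfl | hj
      · simp
      · rw [Function.update_of_ne (fun h => hj (Fin.succ_injective _ h)),
          Function.update_of_ne hj]
    by_cases hm : m 0 = 0
    · -- first coordinate is 0
      rw [if_pos hm, if_neg (by rw [hm]; decide)]
      rw [zero_add]
      have key : ∀ i : Fin s,
          (∏ j : Fin (s+1), if j < i.succ then q ^ (2*((m j : ℕ):ℤ)-1) else 1) *
            (if m i.succ = 1 then theta q (s+1) k (Function.update m i.succ 0) else 0)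
          = q ^ (-((k:ℤ)+1)) *
            ((∏ j : Fin s, if j < i then q ^ (2*(((fun t : Fin s => m t.succ) j : ℕ):ℤ)-1) else 1) *
              (if (fun t : Fin s => m t.succ) i = 1 then
                theta q s k (Function.update (fun t : Fin s => m t.succ) i 0) else 0)) := by
        intro i
        rw [hsucc i, ih (Function.update m i.succ 0)]
        rw [Function.update_of_ne (Fin.succ_ne_zero i).symm, if_pos hm, hupd i]
        rw [hm]
        by_cases hti : m i.succ = 1
        · rw [if_pos hti, if_pos hti]
          have hz : q ^ (2*(((0:Fin 2) : ℕ):ℤ)-1) * q ^ (-(k:ℤ)) = q ^ (-((k:ℤ)+1)) := by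
            rw [← zpow_add₀ h0]; norm_num
          rw [← hz]; ring
        · rw [if_neg hti, if_neg hti, mul_zero, mul_zero, mul_zero]
      rw [Finset.sum_congr rfl (fun i _ => key i), ← Finset.mul_sum]
      have : -((k:ℤ)+1) = -(((k+1:ℕ)):ℤ) := by push_cast; ring
      rw [this, theta_succ]
      try rfl
    · -- first coordinate is 1
      have hm1 : m 0 = 1 := (fin2_cases (m 0)).resolve_left hm
      rw [if_neg hm, if_pos hm1]
      -- term 0
      have hterm0 : theta q (s+1) k (Function.update m 0 0)
          = q ^ (-(k:ℤ)) * theta q s k (fun i => m i.succ) := by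
        rw [ih, if_pos (Function.update_self _ _ _)]
        have hup : (fun j : Fin s => Function.update m 0 0 j.succ)
            = fun j : Fin s => m j.succ := by
          funext j
          rw [Function.update_of_ne (Fin.succ_ne_zero j)]
        rw [hup]
      have key : ∀ i : Fin s,
          (∏ j : Fin (s+1), if j < i.succ then q ^ (2*((m j : ℕ):ℤ)-1) else 1) *
            (if m i.succ = 1 then theta q (s+1) k (Function.update m i.succ 0) else 0)
          = (q * qint q (k:ℤ)) *
            ((∏ j : Fin s, if j < i then q ^ (2*(((fun t : Fin s => m t.succ) j : ℕ):ℤ)-1) else 1) *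
              (if (fun t : Fin s => m t.succ) i = 1 then
                theta q s (k-1) (Function.update (fun t : Fin s => m t.succ) i 0) else 0)) := by
        intro i
        rw [hsucc i, ih (Function.update m i.succ 0)]
        rw [Function.update_of_ne (Fin.succ_ne_zero i).symm, if_neg hm, hupd i]
        rw [hm1]
        by_cases hti : m i.succ = 1
        · rw [if_pos hti, if_pos hti]
          have hz : q ^ (2*(((1:Fin 2) : ℕ):ℤ)-1) = q := by norm_num
          rw [hz]; ring
        · rw [if_neg hti, if_neg hti, mul_zero, mul_zero, mul_zero]
      rw [hterm0, Finset.sum_congr rfl (fun i _ => key i), ← Finset.mul_sum]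
      have hFop : (∑ i : Fin s,
          ((∏ j : Fin s, if j < i then q ^ (2*(((fun t : Fin s => m t.succ) j : ℕ):ℤ)-1) else 1) *
            (if (fun t : Fin s => m t.succ) i = 1 then
              theta q s (k-1) (Function.update (fun t : Fin s => m t.succ) i 0) else 0)))
          = theta q s (k-1+1) (fun t : Fin s => m t.succ) := by
        rw [theta_succ]
        try rfl
      rw [hFop]
      rcases Nat.eq_zero_or_pos k with rfl | hk
      · norm_num [qint_zero, qint_one hq]
      · have hk1 : k - 1 + 1 = k := Nat.succ_pred_eq_of_pos hk
        rw [hk1, Nat.add_sub_cancel,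
          show ((k+1:ℕ):ℤ) = (k:ℤ)+1 by push_cast; ring, ← qB hq (k:ℤ)]
        ring
end CG2


namespace CG2
open CG
variable {q : ℂ}

lemma qA2 (hq : NotRootOfUnity q) (k s : ℤ) :
    qint q k * q ^ (k-1-s) + q ^ (2*k-s) = qint q (k+1) * q ^ (k-s) := by
  have h0 := hq.1
  rw [show k-1-s = -1 + (k-s) by ring, show 2*k-s = k + (k-s) by ring,
    zpow_add₀ h0, zpow_add₀ h0, ← qA' hq k, zpow_neg_one]
  ring

/-- Peeling the last (rightmost) tensorand. -/
lemma thetaA (hq : NotRootOfUnity q) (s : ℕ) :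
    ∀ (k : ℕ) (m : Fin (s+1) → Fin 2),
    theta q (s+1) k m =
      if m (Fin.last s) = 0 then theta q s k (fun i => m i.castSucc)
      else qint q (k:ℤ) * q ^ ((k:ℤ)-1-(s:ℤ)) * theta q s (k-1) (fun i => m i.castSucc) := by
  have h0 := hq.1
  intro k
  induction k with
  | zero =>
    intro m
    by_cases hm : m (Fin.last s) = 0
    · rw [if_pos hm]
      show e0 (s+1) m = e0 s (fun i => m i.castSucc)
      rw [e0, e0]
      congr 1
      apply propext
      constructor
      · intro h i; exact h i.castSucc
      · intro h i; refine Fin.lastCases hm (fun j => h j) i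
    · rw [if_neg hm, Nat.cast_zero, qint_zero, zero_mul, zero_mul]
      show e0 (s+1) m = 0
      rw [e0, if_neg]
      intro hall; exact hm (hall (Fin.last s))
  | succ k ih =>
    intro m
    rw [theta_succ]
    show (∑ i : Fin (s+1),
      (∏ j : Fin (s+1), if j < i then q ^ (2 * ((m j : ℕ) : ℤ) - 1) else 1) *
        (if m i = 1 then theta q (s+1) k (Function.update m i 0) else 0)) = _
    rw [Fin.sum_univ_castSucc]
    have hupd : ∀ i : Fin s,
        (fun j : Fin s => Function.update m i.castSucc 0 j.castSucc)
          = Function.update (fun j : Fin s => m j.castSucc) i 0 := by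
      intro i; funext j
      rcases eq_or_ne j i with rfl | hj
      · simp
      · rw [Function.update_of_ne (fun h => hj (Fin.castSucc_injective _ h)),
          Function.update_of_ne hj]
    have hupdlast : ∀ i : Fin s, Function.update m i.castSucc 0 (Fin.last s) = m (Fin.last s) :=
      fun i => Function.update_of_ne (Fin.castSucc_lt_last i).ne' _ _
    have hsucc : ∀ i : Fin s,
        (∏ j : Fin (s+1), if j < i.castSucc then q ^ (2*((m j : ℕ):ℤ)-1) else 1)
          = ∏ j : Fin s, (if j < i then q ^ (2*((m j.castSucc : ℕ):ℤ)-1) else 1) := by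
      intro i
      rw [Fin.prod_univ_castSucc, if_neg ((Fin.castSucc_lt_last i).asymm), mul_one]
      apply Finset.prod_congr rfl
      intro j _
      simp only [Fin.castSucc_lt_castSucc_iff]
    have hlastP : (∏ j : Fin (s+1), if j < Fin.last s then q ^ (2*((m j : ℕ):ℤ)-1) else 1)
        = q ^ (2*((cnt (fun i : Fin s => m i.castSucc) : ℕ):ℤ) - (s:ℤ)) := by
      rw [Fin.prod_univ_castSucc, if_neg (lt_irrefl _), mul_one]
      rw [Finset.prod_congr rfl (fun (j : Fin s) _ => if_pos (Fin.castSucc_lt_last j)),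
        prod_zpow' h0]
      congr 1
      rw [Finset.sum_sub_distrib, Finset.sum_const, Finset.card_univ, Fintype.card_fin,
        ← Finset.mul_sum, cnt]
      push_cast
      ring
    by_cases hm : m (Fin.last s) = 0
    · -- last coordinate is 0
      rw [if_pos hm, if_neg (by rw [hm]; decide), mul_zero, add_zero]
      have key : ∀ i : Fin s,
          (∏ j : Fin (s+1), if j < i.castSucc then q ^ (2*((m j : ℕ):ℤ)-1) else 1) *
            (if m i.castSucc = 1 then theta q (s+1) k (Function.update m i.castSucc 0) else 0)
          = (∏ j : Fin s, if j < i then q ^ (2*(((fun t : Fin s => m t.castSucc) j : ℕ):ℤ)-1) else 1) *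
              (if (fun t : Fin s => m t.castSucc) i = 1 then
                theta q s k (Function.update (fun t : Fin s => m t.castSucc) i 0) else 0) := by
        intro i
        rw [hsucc i, ih (Function.update m i.castSucc 0), hupdlast i, if_pos hm, hupd i]
      rw [Finset.sum_congr rfl (fun i _ => key i), theta_succ]
      try rfl
    · -- last coordinate is 1
      have hm1 : m (Fin.last s) = 1 := (fin2_cases _).resolve_left hm
      rw [if_neg hm, if_pos hm1, hlastP]
      have hlastTheta : theta q (s+1) k (Function.update m (Fin.last s) 0)
          = theta q s k (fun i => m i.castSucc) := by
        rw [ih, if_pos (Function.update_self _ _ _)]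
        have hup : (fun j : Fin s => Function.update m (Fin.last s) 0 j.castSucc)
            = fun j : Fin s => m j.castSucc := by
          funext j
          rw [Function.update_of_ne (Fin.castSucc_lt_last j).ne]
        rw [hup]
      rw [hlastTheta]
      have key : ∀ i : Fin s,
          (∏ j : Fin (s+1), if j < i.castSucc then q ^ (2*((m j : ℕ):ℤ)-1) else 1) *
            (if m i.castSucc = 1 then theta q (s+1) k (Function.update m i.castSucc 0) else 0)
          = (qint q (k:ℤ) * q ^ ((k:ℤ)-1-(s:ℤ))) *
            ((∏ j : Fin s, if j < i then q ^ (2*(((fun t : Fin s => m t.castSucc) j : ℕ):ℤ)-1) else 1) *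
              (if (fun t : Fin s => m t.castSucc) i = 1 then
                theta q s (k-1) (Function.update (fun t : Fin s => m t.castSucc) i 0) else 0)) := by
        intro i
        rw [hsucc i, ih (Function.update m i.castSucc 0), hupdlast i, if_neg hm, hupd i]
        by_cases hti : m i.castSucc = 1
        · rw [if_pos hti, if_pos hti]; ring
        · rw [if_neg hti, if_neg hti]
          simp
      rw [Finset.sum_congr rfl (fun i _ => key i), ← Finset.mul_sum]
      have hFop : (∑ i : Fin s,
          ((∏ j : Fin s, if j < i then q ^ (2*(((fun t : Fin s => m t.castSucc) j : ℕ):ℤ)-1) else 1) *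
            (if (fun t : Fin s => m t.castSucc) i = 1 then
              theta q s (k-1) (Function.update (fun t : Fin s => m t.castSucc) i 0) else 0)))
          = theta q s (k-1+1) (fun t : Fin s => m t.castSucc) := by
        rw [theta_succ]
        try rfl
      rw [hFop]
      rcases Nat.eq_zero_or_pos k with rfl | hk
      · -- k = 0
        rw [Nat.cast_zero, qint_zero, zero_mul, zero_mul, zero_add]
        have h1 : qint q (((0:ℕ)+1:ℕ):ℤ) = 1 := by norm_num [qint_one hq]
        rw [h1, one_mul]
        by_cases hth : theta q s (0+1-1) (fun i => m i.castSucc) = 0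
        · rw [hth, mul_zero, mul_zero]
        · have hcnt : cnt (fun i : Fin s => m i.castSucc) = 0 := by
            by_contra hc
            exact hth (theta_support s _ _ hc)
          rw [hcnt]
          norm_num
      · have hk1 : k - 1 + 1 = k := Nat.succ_pred_eq_of_pos hk
        rw [hk1, Nat.add_sub_cancel]
        by_cases hth : theta q s k (fun i => m i.castSucc) = 0
        · rw [hth, mul_zero, mul_zero, mul_zero, add_zero]
        · have hcnt : cnt (fun i : Fin s => m i.castSucc) = k := by
            by_contra hc
            exact hth (theta_support s k _ hc)
          rw [hcnt,
            show ((k+1:ℕ):ℤ) = (k:ℤ)+1 by push_cast; ring,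
            show ((k:ℤ)+1)-1-(s:ℤ) = (k:ℤ)-(s:ℤ) by ring,
            ← qA2 hq (k:ℤ) (s:ℤ)]
          ring
end CG2


namespace CG3
open CG CG2
variable {q : ℂ}

def gam (q : ℂ) (s₁ s₂ m l₁ : ℕ) : ℂ :=
  (-1) ^ l₁ * (qfact q (s₁ - l₁) * qfact q (s₂ - (m - l₁))) /
      (qfact q l₁ * qfact q s₁ * qfact q (m - l₁) * qfact q s₂) *
      (q ^ (l₁ * (s₁ - l₁ + 1)) / (q - q⁻¹) ^ m)

lemma tau0emb_apply (s₁ s₂ m : ℕ) (mm : Fin (s₂ + s₁) → Fin 2) :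
    tau0emb q s₁ s₂ m mm
      = ∑ l₁ ∈ Finset.range (m+1), gam q s₁ s₂ m l₁ *
          (theta q s₂ (m-l₁) (fun i => mm (Fin.castAdd s₁ i)) *
            theta q s₁ l₁ (fun i => mm (Fin.natAdd s₂ i))) := rfl

lemma pihat_apply (s j : ℕ) (v : V s) (mm : Fin (s-2) → Fin 2) :
    pihat q s j v mm = (q⁻¹ - q)/qint q 2 * v (insert2 s j mm 0 1)
      + (1 - q^(-2:ℤ))/qint q 2 * v (insert2 s j mm 1 0) := by
  show (∑ a : Fin 2, ∑ b : Fin 2, pival q a b * v (insert2 s j mm a b)) = _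
  rw [Fin.sum_univ_two, Fin.sum_univ_two, Fin.sum_univ_two]
  rw [show pival q 0 0 = 0 from by rw [pival, if_neg (by decide), if_neg (by decide)],
    show pival q 0 1 = (q⁻¹ - q)/qint q 2 from by rw [pival, if_pos (by decide)],
    show pival q 1 0 = (1 - q^(-2:ℤ))/qint q 2 from by
      rw [pival, if_neg (by decide), if_pos (by decide)],
    show pival q 1 1 = 0 from by rw [pival, if_neg (by decide), if_neg (by decide)]]
  ring

def mmL (t₁ t₂ : ℕ) (mm : Fin ((t₂+1)+(t₁+1)-2) → Fin 2) : Fin t₂ → Fin 2 :=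
  fun i => mm ⟨i.1, by omega⟩

def mmR (t₁ t₂ : ℕ) (mm : Fin ((t₂+1)+(t₁+1)-2) → Fin 2) : Fin t₁ → Fin 2 :=
  fun i => mm ⟨t₂+i.1, by omega⟩

lemma thetaL (hq : NotRootOfUnity q) (t₁ t₂ k : ℕ) (mm : Fin ((t₂+1)+(t₁+1)-2) → Fin 2)
    (a b : Fin 2) :
    theta q (t₂+1) k (fun i => insert2 ((t₂+1)+(t₁+1)) t₂ mm a b (Fin.castAdd (t₁+1) i))
      = if a = 0 then theta q t₂ k (mmL t₁ t₂ mm)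
        else qint q (k:ℤ) * q ^ ((k:ℤ)-1-(t₂:ℤ)) * theta q t₂ (k-1) (mmL t₁ t₂ mm) := by
  simp only [thetaA hq t₂ k]
  have h1 : insert2 ((t₂+1)+(t₁+1)) t₂ mm a b (Fin.castAdd (t₁+1) (Fin.last t₂)) = a := by
    simp only [insert2, Fin.coe_castAdd, Fin.val_last]
    split_ifs <;> first
      | rfl
      | (exfalso; omega)
  have h2 : (fun i : Fin t₂ => insert2 ((t₂+1)+(t₁+1)) t₂ mm a b
        (Fin.castAdd (t₁+1) i.castSucc)) = mmL t₁ t₂ mm := by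
    funext i
    have hi := i.isLt
    simp only [insert2, Fin.coe_castAdd, Fin.coe_castSucc, mmL]
    split_ifs <;> first
      | rfl
      | (exfalso; omega)
      | (exact congrArg mm (Fin.mk_eq_mk.mpr (by omega)))
  rw [h1, h2]

lemma thetaR (hq : NotRootOfUnity q) (t₁ t₂ k : ℕ) (mm : Fin ((t₂+1)+(t₁+1)-2) → Fin 2)
    (a b : Fin 2) :
    theta q (t₁+1) k (fun i => insert2 ((t₂+1)+(t₁+1)) t₂ mm a b (Fin.natAdd (t₂+1) i))
      = if b = 0 then q ^ (-(k:ℤ)) * theta q t₁ k (mmR t₁ t₂ mm)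
        else qint q (k:ℤ) * theta q t₁ (k-1) (mmR t₁ t₂ mm) := by
  simp only [thetaB hq t₁ k]
  have h1 : insert2 ((t₂+1)+(t₁+1)) t₂ mm a b (Fin.natAdd (t₂+1) (0 : Fin (t₁+1))) = b := by
    simp only [insert2, Fin.coe_natAdd, Fin.val_zero]
    split_ifs <;> first
      | rfl
      | (exfalso; omega)
  have h2 : (fun i : Fin t₁ => insert2 ((t₂+1)+(t₁+1)) t₂ mm a b
        (Fin.natAdd (t₂+1) i.succ)) = mmR t₁ t₂ mm := by
    funext i
    have hi := i.isLt
    simp only [insert2, Fin.coe_natAdd, Fin.val_succ, mmR]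
    split_ifs <;> first
      | rfl
      | (exfalso; omega)
      | (exact congrArg mm (Fin.mk_eq_mk.mpr (by omega)))
  rw [h1, h2]

end CG3


namespace CG3
variable {q : ℂ}
open CG CG2

set_option maxHeartbeats 2000000 in
lemma keyCoeff (hq : NotRootOfUnity q) (t₁ t₂ n l : ℕ) (hl : l ≤ n) (h1 : n ≤ t₁)
    (h2 : n ≤ t₂) :
    (q⁻¹ - q)/qint q 2 * gam q (t₁+1) (t₂+1) (n+1) (l+1) * qint q ((l+1:ℕ):ℤ)
      + (1 - q^(-2:ℤ))/qint q 2 * gam q (t₁+1) (t₂+1) (n+1) l *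
          (qint q ((n+1-l:ℕ):ℤ) * q ^ (((n+1-l:ℕ):ℤ)-1-(t₂:ℤ)) * q ^ (-(l:ℤ)))
      = qint q ((t₁:ℤ)+(t₂:ℤ)-(n:ℤ)+2) / (qint q 2 * qint q ((t₁:ℤ)+1) * qint q ((t₂:ℤ)+1))
          * gam q t₁ t₂ n l := by
  have h0 := hq.1
  have hD := qsub_ne hq
  obtain ⟨u, rfl⟩ : ∃ u, t₁ = l + u := ⟨t₁ - l, by omega⟩
  obtain ⟨w, rfl⟩ : ∃ w, n = l + w := ⟨n - l, by omega⟩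
  obtain ⟨v, rfl⟩ : ∃ v, t₂ = l + w + v := ⟨t₂ - (l + w), by omega⟩
  simp only [gam]
  rw [show l+u+1-(l+1) = u from by omega,
      show l+w+1-(l+1) = w from by omega,
      show l+w+v+1-w = l+v+1 from by omega,
      show l+w+1-l = w+1 from by omega,
      show l+w+v+1-(w+1) = l+v from by omega,
      show l+u+1-l = u+1 from by omega,
      show l+u-l = u from by omega,
      show l+w-l = w from by omega,
      show l+w+v-w = l+v from by omega]
  rw [show (l+1)*(u+1) = l*(u+1)+(u+1) from by ring,
      show l*(u+1+1) = l*(u+1)+l from by ring]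
  rw [show (q:ℂ)^(l*(u+1)+(u+1)) = q^(l*(u+1)) * q^(u+1) from pow_add q _ _,
      show (q:ℂ)^(l*(u+1)+l) = q^(l*(u+1)) * q^l from pow_add q _ _]
  rw [qfact_succ l, qfact_succ u, qfact_succ w, qfact_succ (l+v), qfact_succ (l+u),
      qfact_succ (l+w+v)]
  rw [pow_succ (-1:ℂ) l, pow_succ (q - q⁻¹) (l+w)]
  -- right-hand side q-integer via qAdd
  rw [show ((l+u:ℕ):ℤ) + ((l+w+v:ℕ):ℤ) - ((l+w:ℕ):ℤ) + 2
        = ((u:ℤ)+1) + ((l:ℤ)+(v:ℤ)+1) from by push_cast; ring,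
      ← qAdd hq ((u:ℤ)+1) ((l:ℤ)+(v:ℤ)+1)]
  -- zpow → pow conversions
  rw [show ((w+1:ℕ):ℤ) - 1 - ((l+w+v:ℕ):ℤ) = -(((l+v:ℕ)):ℤ) from by push_cast; ring]
  rw [zpow_neg q ((l+v:ℕ):ℤ), zpow_natCast q (l+v)]
  rw [zpow_neg q (l:ℤ), zpow_natCast q l]
  rw [show (q:ℂ)^(-2:ℤ) = (q*q)⁻¹ from by
        rw [show (-2:ℤ) = -((2:ℕ):ℤ) from by norm_num, zpow_neg, zpow_natCast]; norm_num [sq]]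
  rw [show ((u:ℤ)+1) = ((u+1:ℕ):ℤ) from by push_cast; ring, zpow_natCast q (u+1)]
  rw [show -((l:ℤ)+(v:ℤ)+1) = -(((l+v+1:ℕ)):ℤ) from by push_cast; ring,
      zpow_neg q ((l+v+1:ℕ):ℤ), zpow_natCast q (l+v+1)]
  rw [show (q:ℂ)^(l+v) = q^l * q^v from pow_add q l v,
      show (q:ℂ)^(l+v+1) = q^l * q^v * q from by rw [pow_succ, pow_add],
      show (q:ℂ)^(u+1) = q^u * q from pow_succ q u]
  rw [show q⁻¹ - q = -(q - q⁻¹) from by ring,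
      show (1:ℂ) - (q*q)⁻¹ = q⁻¹ * (q - q⁻¹) from by field_simp]
  obtain ⟨D, hDdef, hDne⟩ : ∃ D : ℂ, q - q⁻¹ = D ∧ D ≠ 0 := ⟨_, rfl, hD⟩
  rw [hDdef]
  have hDlw : D ^ (l+w) ≠ 0 := pow_ne_zero _ hDne
  have hqint2 : qint q 2 ≠ 0 := qint_ne hq two_ne_zero
  have hfl : qfact q l ≠ 0 := qfact_ne hq l
  have hfu : qfact q u ≠ 0 := qfact_ne hq u
  have hfw : qfact q w ≠ 0 := qfact_ne hq w
  have hflv : qfact q (l+v) ≠ 0 := qfact_ne hq (l+v)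
  have hflu : qfact q (l+u) ≠ 0 := qfact_ne hq (l+u)
  have hflwv : qfact q (l+w+v) ≠ 0 := qfact_ne hq (l+w+v)
  have hpl : (q:ℂ)^l ≠ 0 := pow_ne_zero _ h0
  have hpu : (q:ℂ)^u ≠ 0 := pow_ne_zero _ h0
  have hpv : (q:ℂ)^v ≠ 0 := pow_ne_zero _ h0
  have hplu : (q:ℂ)^(l*(u+1)) ≠ 0 := pow_ne_zero _ h0
  have hi1 : qint q ((l:ℤ)+1) ≠ 0 := qint_ne hq (by omega)
  have hi2 : qint q ((u:ℤ)+1) ≠ 0 := qint_ne hq (by omega)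
  have hi3 : qint q ((w:ℤ)+1) ≠ 0 := qint_ne hq (by omega)
  have hi4 : qint q ((l:ℤ)+(v:ℤ)+1) ≠ 0 := qint_ne hq (by omega)
  have hi5 : qint q ((l:ℤ)+(u:ℤ)+1) ≠ 0 := qint_ne hq (by omega)
  have hi6 : qint q ((l:ℤ)+(w:ℤ)+(v:ℤ)+1) ≠ 0 := qint_ne hq (by omega)
  obtain ⟨E, hEdef, hEne⟩ : ∃ E : ℂ, D^(l+w) = E ∧ E ≠ 0 := ⟨_, rfl, hDlw⟩
  rw [hEdef]
  obtain ⟨P, hPdef, hPne⟩ : ∃ P : ℂ, q^(l*(u+1)) = P ∧ P ≠ 0 := ⟨_, rfl, hplu⟩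
  rw [hPdef]
  obtain ⟨X, hXdef, hXne⟩ : ∃ X : ℂ, q^l = X ∧ X ≠ 0 := ⟨_, rfl, hpl⟩
  rw [hXdef]
  obtain ⟨U, hUdef, hUne⟩ : ∃ U : ℂ, q^u = U ∧ U ≠ 0 := ⟨_, rfl, hpu⟩
  rw [hUdef]
  obtain ⟨Y, hYdef, hYne⟩ : ∃ Y : ℂ, q^v = Y ∧ Y ≠ 0 := ⟨_, rfl, hpv⟩
  rw [hYdef]
  obtain ⟨S, hSdef⟩ : ∃ S : ℂ, (-1:ℂ)^l = S := ⟨_, rfl⟩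
  rw [hSdef]
  push_cast
  obtain ⟨I2, hI2d, hI2⟩ : ∃ z, qint q 2 = z ∧ z ≠ 0 := ⟨_, rfl, hqint2⟩
  rw [hI2d]
  obtain ⟨B1, hB1d, hB1⟩ : ∃ z, qint q ((l:ℤ)+1) = z ∧ z ≠ 0 := ⟨_, rfl, hi1⟩
  rw [hB1d]
  obtain ⟨B2, hB2d, hB2⟩ : ∃ z, qint q ((u:ℤ)+1) = z ∧ z ≠ 0 := ⟨_, rfl, hi2⟩
  rw [hB2d]
  obtain ⟨B3, hB3d, hB3⟩ : ∃ z, qint q ((w:ℤ)+1) = z ∧ z ≠ 0 := ⟨_, rfl, hi3⟩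
  rw [hB3d]
  obtain ⟨B4, hB4d, hB4⟩ : ∃ z, qint q ((l:ℤ)+(v:ℤ)+1) = z ∧ z ≠ 0 := ⟨_, rfl, hi4⟩
  rw [hB4d]
  obtain ⟨B5, hB5d, hB5⟩ : ∃ z, qint q ((l:ℤ)+(u:ℤ)+1) = z ∧ z ≠ 0 := ⟨_, rfl, hi5⟩
  rw [hB5d]
  obtain ⟨B6, hB6d, hB6⟩ : ∃ z, qint q ((l:ℤ)+(w:ℤ)+(v:ℤ)+1) = z ∧ z ≠ 0 := ⟨_, rfl, hi6⟩
  rw [hB6d]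
  obtain ⟨F1, hF1d, hF1⟩ : ∃ z, qfact q l = z ∧ z ≠ 0 := ⟨_, rfl, hfl⟩
  rw [hF1d]
  obtain ⟨F2, hF2d, hF2⟩ : ∃ z, qfact q u = z ∧ z ≠ 0 := ⟨_, rfl, hfu⟩
  rw [hF2d]
  obtain ⟨F3, hF3d, hF3⟩ : ∃ z, qfact q w = z ∧ z ≠ 0 := ⟨_, rfl, hfw⟩
  rw [hF3d]
  obtain ⟨F4, hF4d, hF4⟩ : ∃ z, qfact q (l+v) = z ∧ z ≠ 0 := ⟨_, rfl, hflv⟩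
  rw [hF4d]
  obtain ⟨F5, hF5d, hF5⟩ : ∃ z, qfact q (l+u) = z ∧ z ≠ 0 := ⟨_, rfl, hflu⟩
  rw [hF5d]
  obtain ⟨F6, hF6d, hF6⟩ : ∃ z, qfact q (l+w+v) = z ∧ z ≠ 0 := ⟨_, rfl, hflwv⟩
  rw [hF6d]
  field_simp
end CG3


namespace CG3
open CG CG2
variable {q : ℂ}

lemma step (hq : NotRootOfUnity q) (t₁ t₂ n : ℕ) (h1 : n ≤ t₁) (h2 : n ≤ t₂) :
    pihat q ((t₂+1)+(t₁+1)) t₂ (tau0emb q (t₁+1) (t₂+1) (n+1))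
      = fun mm => (qint q ((t₁:ℤ)+(t₂:ℤ)-(n:ℤ)+2) /
            (qint q 2 * qint q ((t₁:ℤ)+1) * qint q ((t₂:ℤ)+1)))
          * reindex (by omega : t₂ + t₁ = (t₂+1)+(t₁+1)-2) (tau0emb q t₁ t₂ n) mm := by
  funext mm
  rw [pihat_apply]
  simp only [reindex]
  rw [tau0emb_apply, tau0emb_apply, tau0emb_apply]
  have hLc : (fun i : Fin t₂ => (fun i' : Fin (t₂+t₁) =>
      mm (Fin.cast (by omega : t₂ + t₁ = (t₂+1)+(t₁+1)-2) i')) (Fin.castAdd t₁ i)) = mmL t₁ t₂ mm := rfl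
  have hRc : (fun i : Fin t₁ => (fun i' : Fin (t₂+t₁) =>
      mm (Fin.cast (by omega : t₂ + t₁ = (t₂+1)+(t₁+1)-2) i')) (Fin.natAdd t₂ i)) = mmR t₁ t₂ mm := rfl
  have e01 : ∀ l₁ ∈ Finset.range (n+2),
      gam q (t₁+1) (t₂+1) (n+1) l₁ *
        (theta q (t₂+1) (n+1-l₁) (fun i => insert2 ((t₂+1)+(t₁+1)) t₂ mm 0 1 (Fin.castAdd (t₁+1) i)) *
          theta q (t₁+1) l₁ (fun i => insert2 ((t₂+1)+(t₁+1)) t₂ mm 0 1 (Fin.natAdd (t₂+1) i)))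
      = gam q (t₁+1) (t₂+1) (n+1) l₁ *
          (theta q t₂ (n+1-l₁) (mmL t₁ t₂ mm) *
            (qint q (l₁:ℤ) * theta q t₁ (l₁-1) (mmR t₁ t₂ mm))) := by
    intro l₁ _
    rw [thetaL hq t₁ t₂ _ mm 0 1, thetaR hq t₁ t₂ _ mm 0 1,
      if_pos rfl, if_neg (by decide)]
  have e10 : ∀ l₁ ∈ Finset.range (n+2),
      gam q (t₁+1) (t₂+1) (n+1) l₁ *
        (theta q (t₂+1) (n+1-l₁) (fun i => insert2 ((t₂+1)+(t₁+1)) t₂ mm 1 0 (Fin.castAdd (t₁+1) i)) *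
          theta q (t₁+1) l₁ (fun i => insert2 ((t₂+1)+(t₁+1)) t₂ mm 1 0 (Fin.natAdd (t₂+1) i)))
      = gam q (t₁+1) (t₂+1) (n+1) l₁ *
          ((qint q ((n+1-l₁:ℕ):ℤ) * q ^ (((n+1-l₁:ℕ):ℤ)-1-(t₂:ℤ)) *
              theta q t₂ (n+1-l₁-1) (mmL t₁ t₂ mm)) *
            (q ^ (-(l₁:ℤ)) * theta q t₁ l₁ (mmR t₁ t₂ mm))) := by
    intro l₁ _
    rw [thetaL hq t₁ t₂ _ mm 1 0, thetaR hq t₁ t₂ _ mm 1 0,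
      if_neg (by decide), if_pos rfl]
  rw [Finset.sum_congr rfl e01, Finset.sum_congr rfl e10, hLc, hRc]
  rw [Finset.sum_range_succ'
    (fun l₁ => gam q (t₁+1) (t₂+1) (n+1) l₁ *
      (theta q t₂ (n+1-l₁) (mmL t₁ t₂ mm) * (qint q (l₁:ℤ) * theta q t₁ (l₁-1) (mmR t₁ t₂ mm)))) (n+1)]
  rw [Finset.sum_range_succ
    (fun l₁ => gam q (t₁+1) (t₂+1) (n+1) l₁ *
      ((qint q ((n+1-l₁:ℕ):ℤ) * q ^ (((n+1-l₁:ℕ):ℤ)-1-(t₂:ℤ)) * theta q t₂ (n+1-l₁-1) (mmL t₁ t₂ mm)) *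
        (q ^ (-(l₁:ℤ)) * theta q t₁ l₁ (mmR t₁ t₂ mm)))) (n+1)]
  rw [show qint q ((0:ℕ):ℤ) = 0 from by rw [Nat.cast_zero, qint_zero]]
  rw [show ((n+1-(n+1):ℕ):ℤ) = 0 from by norm_num, qint_zero]
  simp only [mul_zero, zero_mul, add_zero]
  rw [Finset.mul_sum, Finset.mul_sum, Finset.mul_sum, ← Finset.sum_add_distrib]
  apply Finset.sum_congr rfl
  intro l hl
  rw [Finset.mem_range] at hl
  have hl' : l ≤ n := by omega
  have i1 : n + 1 - (l + 1) = n - l := by omega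
  have i2 : l + 1 - 1 = l := by omega
  have i3 : n + 1 - l - 1 = n - l := by omega
  rw [i1, i2, i3]
  have hco := keyCoeff hq t₁ t₂ n l hl' h1 h2
  calc (q⁻¹ - q)/qint q 2 *
        (gam q (t₁+1) (t₂+1) (n+1) (l+1) *
          (theta q t₂ (n-l) (mmL t₁ t₂ mm) * (qint q ((l+1:ℕ):ℤ) * theta q t₁ l (mmR t₁ t₂ mm))))
      + (1 - q^(-2:ℤ))/qint q 2 *
        (gam q (t₁+1) (t₂+1) (n+1) l *
          ((qint q ((n+1-l:ℕ):ℤ) * q ^ (((n+1-l:ℕ):ℤ)-1-(t₂:ℤ)) * theta q t₂ (n-l) (mmL t₁ t₂ mm)) *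
            (q ^ (-(l:ℤ)) * theta q t₁ l (mmR t₁ t₂ mm))))
      = ((q⁻¹ - q)/qint q 2 * gam q (t₁+1) (t₂+1) (n+1) (l+1) * qint q ((l+1:ℕ):ℤ)
          + (1 - q^(-2:ℤ))/qint q 2 * gam q (t₁+1) (t₂+1) (n+1) l *
              (qint q ((n+1-l:ℕ):ℤ) * q ^ (((n+1-l:ℕ):ℤ)-1-(t₂:ℤ)) * q ^ (-(l:ℤ)))) *
        (theta q t₂ (n-l) (mmL t₁ t₂ mm) * theta q t₁ l (mmR t₁ t₂ mm)) := by ring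
    _ = _ := by rw [hco]; ring
end CG3


namespace CG4
open CG CG2 CG3
variable {q : ℂ}

lemma pihatIter_succ (t s j : ℕ) (v : V s) :
    pihatIter q (t+1) s j v
      = reindex (by omega) (pihatIter q t (s-2) (j-1) (pihat q s j v)) := rfl

lemma pihat_smul (c : ℂ) (s j : ℕ) (v : V s) :
    pihat q s j (fun mm => c * v mm) = fun mm => c * pihat q s j v mm := by
  funext mm
  show (∑ a : Fin 2, ∑ b : Fin 2, pival q a b * (c * v (insert2 s j mm a b)))
      = c * ∑ a : Fin 2, ∑ b : Fin 2, pival q a b * v (insert2 s j mm a b)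
  rw [Finset.mul_sum]
  apply Finset.sum_congr rfl
  intro a _
  rw [Finset.mul_sum]
  apply Finset.sum_congr rfl
  intro b _
  ring

lemma pihatIter_smul (c : ℂ) : ∀ (t s j : ℕ) (v : V s),
    pihatIter q t s j (fun mm => c * v mm) = fun mm => c * pihatIter q t s j v mm := by
  intro t
  induction t with
  | zero => intro s j v; rfl
  | succ t ih =>
    intro s j v
    rw [pihatIter_succ, pihatIter_succ, pihat_smul, ih]
    rfl

lemma pihatIter_reindex (t : ℕ) {n n' : ℕ} (h : n = n') (j : ℕ) (v : V n) :
    pihatIter q t n' j (reindex h v) = reindex (by omega) (pihatIter q t n j v) := by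
  subst h
  rfl

lemma e0_double {n a b : ℕ} (h2 : n = a) (h0 : a = b) (mm : Fin b → Fin 2) :
    e0 n (fun i => mm (Fin.cast h0 (Fin.cast h2 i))) = e0 b mm := by
  subst h2; subst h0; rfl

lemma qfact_zero : qfact q 0 = 1 := Finset.prod_range_zero _

lemma tens_e0 (s₂ s₁ : ℕ) : (tens (e0 s₂) (e0 s₁) : V (s₂+s₁)) = e0 (s₂+s₁) := by
  funext mm
  show (if (∀ i : Fin s₂, mm (Fin.castAdd s₁ i) = 0) then (1:ℂ) else 0) *
      (if (∀ i : Fin s₁, mm (Fin.natAdd s₂ i) = 0) then (1:ℂ) else 0)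
    = if (∀ i, mm i = 0) then 1 else 0
  by_cases h : ∀ i : Fin (s₂+s₁), mm i = 0
  · rw [if_pos h, if_pos (fun i => h _), if_pos (fun i => h _), mul_one]
  · rw [if_neg h]
    push_neg at h
    obtain ⟨i, hi⟩ := h
    have hib := i.isLt
    by_cases hlt : (i : ℕ) < s₂
    · apply mul_eq_zero_of_left
      rw [if_neg]
      intro hall
      apply hi
      have hv : (Fin.castAdd s₁ (⟨i.1, hlt⟩ : Fin s₂)) = i := Fin.ext rfl
      have := hall ⟨i.1, hlt⟩
      rw [hv] at this
      exact this
    · apply mul_eq_zero_of_right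
      rw [if_neg]
      intro hall
      apply hi
      have hv : (Fin.natAdd s₂ (⟨i.1 - s₂, by omega⟩ : Fin s₁)) = i := by
        apply Fin.ext
        show s₂ + (i.1 - s₂) = i.1
        omega
      have := hall ⟨i.1 - s₂, by omega⟩
      rw [hv] at this
      exact this

lemma base (hq : NotRootOfUnity q) (s₁ s₂ : ℕ) :
    tau0emb q s₁ s₂ 0 = fun mm => Cconst q 0 s₁ s₂ * e0 (s₂+s₁) mm := by
  have h₁ := qfact_ne hq s₁
  have h₂ := qfact_ne hq s₂
  have h₃ := qfact_ne hq (s₁+s₂-2*0+1)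
  funext mm
  rw [tau0emb_apply, Finset.sum_range_one]
  have hg : gam q s₁ s₂ 0 0 = 1 := by
    rw [gam, qfact_zero]
    norm_num
    exact ⟨h₁, h₂⟩
  have hC : Cconst q 0 s₁ s₂ = 1 := by
    rw [Cconst]
    norm_num
    rw [show s₁+s₂-2*0+1 = s₁+s₂+1 from by omega] at h₃
    exact ⟨⟨h₁, h₂⟩, h₃⟩
  rw [hg, hC, one_mul, one_mul]
  exact congrFun (tens_e0 s₂ s₁) mm

lemma Cconst_ne (hq : NotRootOfUnity q) (m s₁ s₂ : ℕ) : Cconst q m s₁ s₂ ≠ 0 := by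
  apply div_ne_zero
  · exact mul_ne_zero (mul_ne_zero (qfact_ne hq _) (qfact_ne hq _)) (qfact_ne hq _)
  · exact mul_ne_zero (mul_ne_zero (mul_ne_zero
      (pow_ne_zero _ (qint_ne hq two_ne_zero)) (qfact_ne hq _)) (qfact_ne hq _)) (qfact_ne hq _)

set_option maxHeartbeats 1000000 in
lemma CconstStep (hq : NotRootOfUnity q) (t₁ t₂ n : ℕ) (h1 : n ≤ t₁) (h2 : n ≤ t₂) :
    (qint q ((t₁:ℤ)+(t₂:ℤ)-(n:ℤ)+2) / (qint q 2 * qint q ((t₁:ℤ)+1) * qint q ((t₂:ℤ)+1)))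
      * Cconst q n t₁ t₂ = Cconst q (n+1) (t₁+1) (t₂+1) := by
  obtain ⟨u, rfl⟩ : ∃ u, t₁ = n + u := ⟨t₁ - n, by omega⟩
  obtain ⟨v, rfl⟩ : ∃ v, t₂ = n + v := ⟨t₂ - n, by omega⟩
  rw [Cconst, Cconst]
  rw [show n+u-n = u from by omega,
      show n+v-n = v from by omega,
      show n+u+(n+v)-n+1 = n+u+v+1 from by omega,
      show n+u+(n+v)-2*n+1 = u+v+1 from by omega,
      show n+u+1-(n+1) = u from by omega,
      show n+v+1-(n+1) = v from by omega,
      show n+u+1+(n+v+1)-(n+1)+1 = n+u+v+1+1 from by omega,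
      show n+u+1+(n+v+1)-2*(n+1)+1 = u+v+1 from by omega]
  rw [qfact_succ (n+u+v+1), pow_succ (qint q 2) n]
  rw [show ((n+u:ℕ):ℤ)+((n+v:ℕ):ℤ)-((n:ℕ):ℤ)+2 = ((n+u+v+1:ℕ):ℤ)+1 from by push_cast; ring]
  rw [show qfact q (n+u+1) = qfact q (n+u) * qint q (((n+u:ℕ):ℤ)+1) from qfact_succ (n+u),
      show qfact q (n+v+1) = qfact q (n+v) * qint q (((n+v:ℕ):ℤ)+1) from qfact_succ (n+v)]
  have hI2 : qint q 2 ≠ 0 := qint_ne hq two_ne_zero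
  have hI2n : qint q 2 ^ n ≠ 0 := pow_ne_zero _ hI2
  have hfu : qfact q u ≠ 0 := qfact_ne hq u
  have hfv : qfact q v ≠ 0 := qfact_ne hq v
  have hfnu : qfact q (n+u) ≠ 0 := qfact_ne hq (n+u)
  have hfnv : qfact q (n+v) ≠ 0 := qfact_ne hq (n+v)
  have hfnuv : qfact q (n+u+v+1) ≠ 0 := qfact_ne hq (n+u+v+1)
  have hfuv : qfact q (u+v+1) ≠ 0 := qfact_ne hq (u+v+1)
  have hb1 : qint q (((n+u:ℕ):ℤ)+1) ≠ 0 := qint_ne hq (by omega)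
  have hb2 : qint q (((n+v:ℕ):ℤ)+1) ≠ 0 := qint_ne hq (by omega)
  have hb3 : qint q (((n+u+v+1:ℕ):ℤ)+1) ≠ 0 := qint_ne hq (by omega)
  field_simp

lemma mainAux (hq : NotRootOfUnity q) : ∀ (m s₁ s₂ : ℕ), m ≤ s₁ → m ≤ s₂ →
    pihatIter q m (s₂ + s₁) (s₂ - 1) (tau0emb q s₁ s₂ m)
      = fun mm => Cconst q m s₁ s₂ * e0 (s₂ + s₁ - 2*m) mm := by
  intro m
  induction m with
  | zero =>
    intro s₁ s₂ _ _
    exact base hq s₁ s₂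
  | succ n ih =>
    intro s₁ s₂ h1 h2
    obtain ⟨t₁, rfl⟩ : ∃ t, s₁ = t+1 := ⟨s₁-1, by omega⟩
    obtain ⟨t₂, rfl⟩ : ∃ t, s₂ = t+1 := ⟨s₂-1, by omega⟩
    have h1' : n ≤ t₁ := by omega
    have h2' : n ≤ t₂ := by omega
    rw [pihatIter_succ]
    simp only [Nat.add_sub_cancel]
    rw [step hq t₁ t₂ n h1' h2']
    rw [pihatIter_smul]
    rw [pihatIter_reindex n (by omega : t₂ + t₁ = (t₂+1)+(t₁+1)-2) (t₂-1)
      (tau0emb q t₁ t₂ n)]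
    rw [ih t₁ t₂ h1' h2']
    funext mm
    show (qint q ((t₁:ℤ)+(t₂:ℤ)-(n:ℤ)+2) / (qint q 2 * qint q ((t₁:ℤ)+1) * qint q ((t₂:ℤ)+1)))
        * (Cconst q n t₁ t₂ *
            e0 (t₂ + t₁ - 2*n) (fun i => mm (Fin.cast _ (Fin.cast _ i)))) = _
    rw [e0_double (by omega) (by omega) mm]
    rw [← CconstStep hq t₁ t₂ n h1' h2']
    ring
end CG4


/-- Applying the `m` middle trivial projections to the embedded Clebsch–Gordan highest
weight vector of the `δ`-dimensional summand (`δ = s₁+s₂-2m+1`) yields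
`C(m;s₁,s₂) · e₀^{(δ)}`, where the resulting vector of `M₂^{⊗r}` (`r = s₁+s₂-2m`) lies in
the top summand `M_δ` and `e₀^{(δ)}` is identified with `θ₀^{(r)} = e₀^{⊗r}`;
moreover `C(m;s₁,s₂) ≠ 0`. -/
theorem iterated_middle_projection_of_CG_vector
    (q : ℂ) (hq : NotRootOfUnity q) (s₁ s₂ : ℕ) (hs₁ : 1 ≤ s₁) (hs₂ : 1 ≤ s₂)
    (m : ℕ) (hm : 1 ≤ m) (hm₁ : m ≤ s₁) (hm₂ : m ≤ s₂) :
    pihatIter q m (s₂ + s₁) (s₂ - 1) (tau0emb q s₁ s₂ m)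
        = (fun mm => Cconst q m s₁ s₂ * e0 (s₂ + s₁ - 2 * m) mm) ∧
      Cconst q m s₁ s₂ ≠ 0 := ⟨CG4.mainAux hq m s₁ s₂ hm₁ hm₂, CG4.Cconst_ne hq m s₁ s₂⟩
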